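/- Let U be a positive semidefinite symmetric (n-1)×(n-1) real matrix, K a symmetric matrix with -K positive semidefinite, and let U' = -U² - K (the Riccati equation). Define ψ = -tr(U) and φ - ψ = -tr(U(I + U²)^{-1} U'). Then |φ - ψ| ≤ (tr U)³ + (tr U)·tr(-K); i.e., |φ - ψ| ≤ (-ψ)((-ψ)² + tr(-K)). -/

import Mathlib

open Matrix in
lemma frob_trace {m : Type*} [Fintype m] (C : Matrix m m ℝ) :
    (Cᴴ * C).trace = ∑ j, ∑ i, (C i j)^2 := by
  simp [Matrix.trace, Matrix.mul_apply, Matrix.diag, Matrix.conjTranspose_apply, sq]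

open Matrix in
lemma frob_trace' {m : Type*} [Fintype m] {C : Matrix m m ℝ} (h : C.IsHermitian) :
    (C * C).trace = ∑ j, ∑ i, (C i j)^2 := by
  rw [show C * C = Cᴴ * C by rw [h.eq]]
  exact frob_trace C

open scoped MatrixOrder in
noncomputable def Matrix.PosSemidef.sqrt {m : Type*} [Fintype m] [DecidableEq m]
    {A : Matrix m m ℝ} (_ : A.PosSemidef) : Matrix m m ℝ := CFC.sqrt A

open scoped MatrixOrder in
lemma Matrix.PosSemidef.posSemidef_sqrt {m : Type*} [Fintype m] [DecidableEq m]
    {A : Matrix m m ℝ} (hA : A.PosSemidef) : hA.sqrt.PosSemidef :=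
  Matrix.nonneg_iff_posSemidef.mp (CFC.sqrt_nonneg A)

open scoped MatrixOrder in
lemma Matrix.PosSemidef.sqrt_mul_self {m : Type*} [Fintype m] [DecidableEq m]
    {A : Matrix m m ℝ} (hA : A.PosSemidef) : hA.sqrt * hA.sqrt = A :=
  CFC.sqrt_mul_sqrt_self A hA.nonneg

open Matrix in
lemma key_trace {m : Type*} [Fintype m] [DecidableEq m]
    {A B : Matrix m m ℝ} (hA : A.PosSemidef) (hB : B.PosSemidef) :
    (A * B).trace = ((hA.sqrt * hB.sqrt)ᴴ * (hA.sqrt * hB.sqrt)).trace := by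
  rw [conjTranspose_mul, hA.posSemidef_sqrt.1.eq, hB.posSemidef_sqrt.1.eq,
    show hB.sqrt * hA.sqrt * (hA.sqrt * hB.sqrt) = hB.sqrt * (hA.sqrt * hA.sqrt * hB.sqrt) by
      noncomm_ring]
  conv_rhs => rw [Matrix.trace_mul_comm]
  rw [show hA.sqrt * hA.sqrt * hB.sqrt * hB.sqrt
        = (hA.sqrt * hA.sqrt) * (hB.sqrt * hB.sqrt) by noncomm_ring,
    hA.sqrt_mul_self, hB.sqrt_mul_self]

open Matrix in
lemma trace_mul_psd_nonneg {m : Type*} [Fintype m] [DecidableEq m]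
    {A B : Matrix m m ℝ} (hA : A.PosSemidef) (hB : B.PosSemidef) :
    0 ≤ (A * B).trace := by
  rw [key_trace hA hB, frob_trace]
  positivity

open Matrix in
lemma trace_psd_nonneg {m : Type*} [Fintype m] [DecidableEq m]
    {A : Matrix m m ℝ} (hA : A.PosSemidef) : 0 ≤ A.trace := by
  have := trace_mul_psd_nonneg hA (Matrix.PosSemidef.one (n := m) (R := ℝ))
  simpa using this

open Matrix in
lemma trace_mul_psd_le {m : Type*} [Fintype m] [DecidableEq m]
    {A B : Matrix m m ℝ} (hA : A.PosSemidef) (hB : B.PosSemidef) :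
    (A * B).trace ≤ A.trace * B.trace := by
  have hAt : A.trace = ∑ i, ∑ k, (hA.sqrt i k)^2 := by
    have h1 : A.trace = (hA.sqrt * hA.sqrt).trace := by rw [hA.sqrt_mul_self]
    rw [h1, frob_trace' hA.posSemidef_sqrt.1]
    exact Finset.sum_comm
  have hBt : B.trace = ∑ j, ∑ k, (hB.sqrt k j)^2 := by
    have h1 : B.trace = (hB.sqrt * hB.sqrt).trace := by rw [hB.sqrt_mul_self]
    rw [h1, frob_trace' hB.posSemidef_sqrt.1]
  rw [key_trace hA hB, frob_trace]
  calc ∑ j, ∑ i, ((hA.sqrt * hB.sqrt) i j)^2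
      ≤ ∑ j, ∑ i, (∑ k, (hA.sqrt i k)^2) * (∑ k, (hB.sqrt k j)^2) := by
        refine Finset.sum_le_sum fun j _ => Finset.sum_le_sum fun i _ => ?_
        simpa [Matrix.mul_apply] using
          Finset.sum_mul_sq_le_sq_mul_sq Finset.univ (fun k => hA.sqrt i k) (fun k => hB.sqrt k j)
    _ = (∑ j, ∑ k, (hB.sqrt k j)^2) * (∑ i, ∑ k, (hA.sqrt i k)^2) := by
        rw [Finset.sum_mul_sum]
        exact Finset.sum_congr rfl fun j _ => Finset.sum_congr rfl fun i _ => mul_comm _ _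
    _ = A.trace * B.trace := by rw [hAt, hBt, mul_comm]

/-- Linear-algebra estimate comparing `φ^u` and `ψ^u`: with `U ⪰ 0` symmetric, `-K ⪰ 0`,
`U' = -U² - K`, `ψ = -tr U` and `φ - ψ = -tr(U(I+U²)⁻¹U')`, one has
`|φ - ψ| ≤ (tr U)³ + (tr U)·tr(-K) = (-ψ)((-ψ)² + tr(-K))`. -/
theorem stmt17 (n : ℕ) (U K : Matrix (Fin (n-1)) (Fin (n-1)) ℝ)
    (hU : U.PosSemidef) (hK : (-K).PosSemidef)
    (φ ψ : ℝ) (hψ : ψ = -U.trace)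
    (hφ : φ - ψ = -(U * (1 + U^2)⁻¹ * (-(U^2) - K)).trace) :
    |φ - ψ| ≤ U.trace^3 + U.trace * (-K).trace := by
  set V : Matrix (Fin (n-1)) (Fin (n-1)) ℝ := (1 + U^2)⁻¹ with hVdef
  have h1U2 : (1 + U^2).PosDef := Matrix.PosDef.one.add_posSemidef (hU.pow 2)
  have hV : V.PosDef := h1U2.inv
  have hVs : V.PosSemidef := hV.posSemidef
  have hdet : IsUnit (1 + U^2).det := h1U2.det_pos.ne'.isUnit
  have hmul : (1 + U^2) * V = 1 := Matrix.mul_nonsing_inv _ hdet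
  have hmul' : V * (1 + U^2) = 1 := Matrix.nonsing_inv_mul _ hdet
  have h1mV : 1 - V = U^2 * V := by
    have h : V + U^2 * V = 1 := by rw [← hmul]; noncomm_ring
    linear_combination (norm := noncomm_ring) -h
  -- U*V is PSD
  have hUVeq : U * V = V * (U + U^3) * V := by
    calc U * V = (V * (1 + U^2)) * (U * V) := by rw [hmul', one_mul]
      _ = V * ((1 + U^2) * U) * V := by noncomm_ring
      _ = V * (U + U^3) * V := by noncomm_ring
  have hUVpsd : (U * V).PosSemidef := by
    rw [hUVeq]
    have h := (hU.add (hU.pow 3)).mul_mul_conjTranspose_same V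
    rwa [hVs.1.eq] at h
  -- decompose φ - ψ
  have heq : φ - ψ = (U^3 * V).trace - ((U * V) * (-K)).trace := by
    rw [hφ, show U * V * (-(U^2) - K) = -((U * V) * U^2) - (-((U * V) * (-K))) by noncomm_ring,
      Matrix.trace_sub, Matrix.trace_neg, Matrix.trace_neg,
      Matrix.trace_mul_comm (U * V) (U^2),
      show U^2 * (U * V) = U^3 * V by noncomm_ring]
    ring
  -- bounds
  have htU : 0 ≤ U.trace := trace_psd_nonneg hU
  have htK : 0 ≤ (-K).trace := trace_psd_nonneg hK
  have ha0 : 0 ≤ (U^3 * V).trace := trace_mul_psd_nonneg (hU.pow 3) hVs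
  have ha1 : (U^3 * V).trace ≤ (U^3).trace := by
    have h5 : 0 ≤ (U^5 * V).trace := trace_mul_psd_nonneg (hU.pow 5) hVs
    have e : U^3 - U^3 * V = U^5 * V := by
      calc U^3 - U^3 * V = U^3 * (1 - V) := by noncomm_ring
        _ = U^3 * (U^2 * V) := by rw [h1mV]
        _ = U^5 * V := by noncomm_ring
    have := congrArg Matrix.trace e
    rw [Matrix.trace_sub] at this
    linarith
  have hb3 : (U * V).trace ≤ U.trace := by
    have e : U - U * V = U^3 * V := by
      calc U - U * V = U * (1 - V) := by noncomm_ring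
        _ = U * (U^2 * V) := by rw [h1mV]
        _ = U^3 * V := by noncomm_ring
    have := congrArg Matrix.trace e
    rw [Matrix.trace_sub] at this
    linarith
  have hb0 : 0 ≤ ((U * V) * (-K)).trace := trace_mul_psd_nonneg hUVpsd hK
  have hb1 : ((U * V) * (-K)).trace ≤ (U * V).trace * (-K).trace := trace_mul_psd_le hUVpsd hK
  have hb2 : (U * V).trace * (-K).trace ≤ U.trace * (-K).trace :=
    mul_le_mul_of_nonneg_right hb3 htK
  have hU2t : (U^2).trace ≤ U.trace * U.trace := by
    have h := trace_mul_psd_le hU hU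
    rwa [show U * U = U^2 by noncomm_ring] at h
  have hU2tn : 0 ≤ (U^2).trace := trace_psd_nonneg (hU.pow 2)
  have hU3t : (U^3).trace ≤ U.trace * (U^2).trace := by
    have h := trace_mul_psd_le hU (hU.pow 2)
    rwa [show U * U^2 = U^3 by noncomm_ring] at h
  have hU3 : (U^3).trace ≤ U.trace^3 := by nlinarith
  rw [heq, abs_le]
  constructor <;> nlinarith
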